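/- Let 1 ≥ λ₁ > λ₂ ≥ 0 and γ = λ₂/λ₁ (with λ₁ > 0). For any θ₁, θ₂ ∈ ℝ, λ₁² − (λ₁ cos θ₁ cos θ₂ + λ₂ sin θ₁ sin θ₂)² ≤ (1/2) λ₁² (sin² θ₁ + sin² θ₂)(3 + 2γ − γ²). -/

import Mathlib

lemma aux15 (γ c1 s1 c2 s2 : ℝ) (hγ0 : 0 ≤ γ) (hγ1 : γ ≤ 1)
    (h1 : c1 ^ 2 + s1 ^ 2 = 1) (h2 : c2 ^ 2 + s2 ^ 2 = 1) :
    1 - (c1 * c2 + γ * s1 * s2) ^ 2 ≤ (1 / 2) * (s1 ^ 2 + s2 ^ 2) * (3 + 2 * γ - γ ^ 2) := by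
  have hub : c1 * c2 ≤ 1 := by nlinarith [sq_nonneg (c1 - c2), sq_nonneg s1, sq_nonneg s2]
  have hlb : -1 ≤ c1 * c2 := by nlinarith [sq_nonneg (c1 + c2), sq_nonneg s1, sq_nonneg s2]
  nlinarith [mul_nonneg (mul_nonneg hγ0 (by linarith : (0:ℝ) ≤ 1 + c1 * c2)) (sq_nonneg (s1 + s2)),
    mul_nonneg (mul_nonneg hγ0 (by linarith : (0:ℝ) ≤ 1 - c1 * c2)) (sq_nonneg (s1 - s2)),
    mul_nonneg (mul_nonneg (sub_nonneg.2 hγ1) (by linarith : (0:ℝ) ≤ 1 + γ)) (sq_nonneg s1),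
    mul_nonneg (mul_nonneg (sub_nonneg.2 hγ1) (by linarith : (0:ℝ) ≤ 1 + γ)) (sq_nonneg s2),
    sq_nonneg (s1 * s2), mul_nonneg (mul_nonneg hγ0 hγ0) (sq_nonneg (s1 * s2))]

theorem stmt_15 (l1 l2 : ℝ) (h1 : l1 ≤ 1) (h12 : l2 < l1) (h2 : 0 ≤ l2) (h1pos : 0 < l1)
    (γ : ℝ) (hγ : γ = l2 / l1) (θ₁ θ₂ : ℝ) :
    l1 ^ 2 - (l1 * Real.cos θ₁ * Real.cos θ₂ + l2 * Real.sin θ₁ * Real.sin θ₂) ^ 2 ≤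
      (1 / 2) * l1 ^ 2 * (Real.sin θ₁ ^ 2 + Real.sin θ₂ ^ 2) * (3 + 2 * γ - γ ^ 2) := by
  have hl2 : l2 = γ * l1 := by rw [hγ, div_mul_cancel₀]; exact h1pos.ne'
  have hγ0 : 0 ≤ γ := by rw [hγ]; positivity
  have hγ1 : γ ≤ 1 := by rw [hγ]; exact div_le_one_of_le₀ h12.le h1pos.le
  have key := aux15 γ (Real.cos θ₁) (Real.sin θ₁) (Real.cos θ₂) (Real.sin θ₂) hγ0 hγ1
    (Real.cos_sq_add_sin_sq θ₁) (Real.cos_sq_add_sin_sq θ₂)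
  have h1sq : (0:ℝ) < l1 ^ 2 := by positivity
  calc l1 ^ 2 - (l1 * Real.cos θ₁ * Real.cos θ₂ + l2 * Real.sin θ₁ * Real.sin θ₂) ^ 2
      = l1 ^ 2 * (1 - (Real.cos θ₁ * Real.cos θ₂ + γ * Real.sin θ₁ * Real.sin θ₂) ^ 2) := by
        rw [hl2]; ring
    _ ≤ l1 ^ 2 * ((1 / 2) * (Real.sin θ₁ ^ 2 + Real.sin θ₂ ^ 2) * (3 + 2 * γ - γ ^ 2)) :=
        mul_le_mul_of_nonneg_left key h1sq.le
    _ = (1 / 2) * l1 ^ 2 * (Real.sin θ₁ ^ 2 + Real.sin θ₂ ^ 2) * (3 + 2 * γ - γ ^ 2) := by ring
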